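/- Let λ ∈ ℝ with −1 < λ < 0, and define S₁ := {(z, z̄) : z ∈ ℂ} and S₂ := {(z, (1+λ)z̄ + λz + (Im z)²) : z ∈ ℂ}. Then: (a) S₁ ∪ S₂ is not locally polynomially convex at (0,0), i.e., there is no r > 0 such that (S₁ ∪ S₂) ∩ B̄(0;ρ) is polynomially convex for every 0 < ρ ≤ r; and (b) for every t > 0, the set {z ∈ ℂ : Re z = t/2 and 2λ·Re z + (Im z)² = 0} equals the two-point set {t/2 + i√(t|λ|), t/2 − i√(t|λ|)} and hence has exactly two connected components. -/

import Mathlib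

open Complex Metric Set

noncomputable def pEval (P : MvPolynomial (Fin 2) ℂ) (z : ℂ × ℂ) : ℂ :=
  MvPolynomial.eval ![z.1, z.2] P

def PolyConvex (K : Set (ℂ × ℂ)) : Prop :=
  {z : ℂ × ℂ | ∀ P : MvPolynomial (Fin 2) ℂ,
      ‖pEval P z‖ ≤ ⨆ w ∈ K, ‖pEval P w‖} = K

def LocPolyConvexAt (X : Set (ℂ × ℂ)) (p : ℂ × ℂ) : Prop :=
  ∃ r > 0, ∀ ρ : ℝ, 0 < ρ → ρ ≤ r → PolyConvex (X ∩ closedBall p ρ)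

def TotallyRealSub (T : Submodule ℝ (ℂ × ℂ)) : Prop :=
  ∀ v ∈ T, Complex.I • v ∈ T → v = 0

def IsTangentAt (k : ℕ∞) (S : Set (ℂ × ℂ)) (p : ℂ × ℂ) (T : Submodule ℝ (ℂ × ℂ)) : Prop :=
  ∃ (U : Set (ℝ × ℝ)) (f : ℝ × ℝ → ℂ × ℂ) (u : ℝ × ℝ),
    IsOpen U ∧ u ∈ U ∧ f u = p ∧
    ContDiffOn ℝ k f U ∧ Set.InjOn f U ∧
    (∀ v ∈ U, Function.Injective (fderiv ℝ f v)) ∧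
    (∃ V ∈ nhds p, S ∩ V = (f '' U) ∩ V) ∧
    T = LinearMap.range ((fderiv ℝ f u) : (ℝ × ℝ) →ₗ[ℝ] (ℂ × ℂ))

def IsCkSurface (k : ℕ∞) (S : Set (ℂ × ℂ)) : Prop :=
  ∀ p ∈ S, ∃ T, IsTangentAt k S p T

def IsTotallyRealCkSurface (k : ℕ∞) (S : Set (ℂ × ℂ)) : Prop :=
  ∀ p ∈ S, ∃ T, IsTangentAt k S p T ∧ TotallyRealSub T

def IsTotallyRealPlane (M : Submodule ℝ (ℂ × ℂ)) : Prop :=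
  Module.finrank ℝ M = 2 ∧ TotallyRealSub M

lemma pEval_continuous (P : MvPolynomial (Fin 2) ℂ) : Continuous (pEval P) := by
  unfold pEval
  induction P using MvPolynomial.induction_on with
  | C a => simpa using continuous_const (y := a)
  | add p q hp hq => simp only [MvPolynomial.eval_add]; exact hp.add hq
  | mul_X p i hp =>
      simp only [MvPolynomial.eval_mul, MvPolynomial.eval_X]
      refine hp.mul ?_
      fin_cases i
      · simpa using continuous_fst
      · simpa using continuous_snd

lemma pEval_diag_diff (P : MvPolynomial (Fin 2) ℂ) (t : ℂ) :
    Differentiable ℂ (fun z : ℂ => pEval P (z, t - z)) := by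
  unfold pEval
  induction P using MvPolynomial.induction_on with
  | C a => simpa using differentiable_const (c := a) (𝕜 := ℂ)
  | add p q hp hq => simp only [MvPolynomial.eval_add]; exact hp.add hq
  | mul_X p i hp =>
      simp only [MvPolynomial.eval_mul, MvPolynomial.eval_X]
      refine hp.mul ?_
      fin_cases i
      · simp
      · simp; exact (differentiable_const (𝕜 := ℂ) (E := ℂ) t).sub differentiable_id

lemma le_biSup_of_bdd {α : Type*} {f : α → ℝ} {K : Set α} {M : ℝ}
    (hM : ∀ w ∈ K, f w ≤ M) {w₀ : α} (hw₀ : w₀ ∈ K) : f w₀ ≤ ⨆ w ∈ K, f w := by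
  have hb : BddAbove (Set.range fun w => ⨆ _ : w ∈ K, f w) := by
    refine ⟨max M 0, ?_⟩
    rintro x ⟨w, rfl⟩
    by_cases h : w ∈ K
    · show (⨆ _ : w ∈ K, f w) ≤ max M 0
      rw [ciSup_pos (f := fun _ => f w) h]; exact le_max_of_le_left (hM w h)
    · show (⨆ _ : w ∈ K, f w) ≤ max M 0
      haveI : IsEmpty (w ∈ K) := ⟨h⟩
      rw [Real.iSup_of_isEmpty]; exact le_max_right _ _
  calc f w₀ = ⨆ _ : w₀ ∈ K, f w₀ := (ciSup_pos (f := fun _ => f w₀) hw₀).symm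
    _ ≤ ⨆ w ∈ K, f w := le_ciSup hb w₀

/-- with φ(z) = (Im z)² and −1 < λ < 0, the union S₁ ∪ S₂ fails to be
locally polynomially convex at 0, yet for every t > 0 the fibre set
{Re z = t/2, 2λ Re z + (Im z)² = 0} is a two-point set (two connected components). -/
theorem dieu_condition_not_necessary (lam : ℝ) (hlam₁ : -1 < lam) (hlam₂ : lam < 0) :
    (¬ LocPolyConvexAt
        ({q : ℂ × ℂ | ∃ z : ℂ, q = (z, (starRingEnd ℂ) z)} ∪
         {q : ℂ × ℂ | ∃ z : ℂ,
           q = (z, ((1 : ℂ) + (lam : ℂ)) * (starRingEnd ℂ) z + (lam : ℂ) * z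
                 + ((z.im ^ 2 : ℝ) : ℂ))}) 0) ∧
    (∀ t : ℝ, 0 < t →
      {z : ℂ | z.re = t / 2 ∧ 2 * lam * z.re + z.im ^ 2 = 0} =
        {((t / 2 : ℝ) : ℂ) + (Real.sqrt (t * |lam|) : ℂ) * Complex.I,
         ((t / 2 : ℝ) : ℂ) - (Real.sqrt (t * |lam|) : ℂ) * Complex.I} ∧
      ((t / 2 : ℝ) : ℂ) + (Real.sqrt (t * |lam|) : ℂ) * Complex.I ≠
        ((t / 2 : ℝ) : ℂ) - (Real.sqrt (t * |lam|) : ℂ) * Complex.I) := by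
  constructor
  · -- part (a)
    set S₁ : Set (ℂ × ℂ) := {q : ℂ × ℂ | ∃ z : ℂ, q = (z, (starRingEnd ℂ) z)} with hS₁def
    set S₂ : Set (ℂ × ℂ) := {q : ℂ × ℂ | ∃ z : ℂ,
        q = (z, ((1 : ℂ) + (lam : ℂ)) * (starRingEnd ℂ) z + (lam : ℂ) * z
              + ((z.im ^ 2 : ℝ) : ℂ))} with hS₂def
    have hS1 : S₁ = {q : ℂ × ℂ | q.2 = (starRingEnd ℂ) q.1} := by
      ext ⟨a, b⟩; simp [hS₁def, Prod.ext_iff, eq_comm]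
    have hS2 : S₂ = {q : ℂ × ℂ | q.2 = ((1:ℂ) + lam) * (starRingEnd ℂ) q.1 + (lam:ℂ) * q.1
        + ((q.1.im ^ 2 : ℝ) : ℂ)} := by
      ext ⟨a, b⟩; simp [hS₂def, Prod.ext_iff]
    have hclosed : IsClosed (S₁ ∪ S₂) := by
      rw [hS1, hS2]
      refine IsClosed.union ?_ ?_
      · exact isClosed_eq continuous_snd (Complex.continuous_conj.comp continuous_fst)
      · refine isClosed_eq continuous_snd ?_
        refine (Continuous.add (Continuous.add ?_ ?_) ?_)
        · exact continuous_const.mul (Complex.continuous_conj.comp continuous_fst)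
        · exact continuous_const.mul continuous_fst
        · exact Complex.continuous_ofReal.comp
            ((Complex.continuous_im.comp continuous_fst).pow 2)
    rintro ⟨r, hr, H⟩
    have hPC : PolyConvex ((S₁ ∪ S₂) ∩ closedBall 0 r) := H r hr le_rfl
    set K := (S₁ ∪ S₂) ∩ closedBall (0 : ℂ × ℂ) r with hK
    -- constants
    set ε : ℝ := 2 + 2 * lam with hε
    have hεpos : 0 < ε := by simp [hε]; linarith
    have hεlt : ε < 2 := by simp [hε]; linarith
    set c : ℝ := 2 + 1 / ε with hc
    have hcpos : 0 < c := by positivity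
    set t : ℝ := min 1 ((r / c) ^ 2) with ht
    have htpos : 0 < t := lt_min one_pos (by positivity)
    have ht1 : t ≤ 1 := min_le_left _ _
    have htsqrt : Real.sqrt t ≤ r / c := by
      calc Real.sqrt t ≤ Real.sqrt ((r / c) ^ 2) := Real.sqrt_le_sqrt (min_le_right _ _)
        _ = |r / c| := by rw [Real.sqrt_sq_eq_abs]
        _ = r / c := abs_of_pos (by positivity)
    have htle : t ≤ Real.sqrt t := by
      calc t = Real.sqrt (t ^ 2) := by rw [Real.sqrt_sq htpos.le]
        _ ≤ Real.sqrt t := Real.sqrt_le_sqrt (by nlinarith)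
    have hsqrtpos : 0 < Real.sqrt t := Real.sqrt_pos.mpr htpos
    -- the region U
    set U : Set ℂ := {z : ℂ | t / 2 < z.re ∧ ε * z.re + z.im ^ 2 < t} with hU
    have hUopen : IsOpen U := by
      apply IsOpen.inter
      · exact isOpen_lt continuous_const Complex.continuous_re
      · exact isOpen_lt (Continuous.add (continuous_const.mul Complex.continuous_re)
          (Complex.continuous_im.pow 2)) continuous_const
    have hUsub : closure U ⊆ {z : ℂ | t / 2 ≤ z.re ∧ ε * z.re + z.im ^ 2 ≤ t} := by
      apply closure_minimal
      · intro z hz; exact ⟨hz.1.le, hz.2.le⟩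
      · apply IsClosed.inter
        · exact isClosed_le continuous_const Complex.continuous_re
        · exact isClosed_le (Continuous.add (continuous_const.mul Complex.continuous_re)
            (Complex.continuous_im.pow 2)) continuous_const
    -- bounds on closure U
    have hclbound : ∀ z ∈ closure U, ‖z‖ ≤ t / ε + Real.sqrt t ∧ ‖(t:ℂ) - z‖ ≤ t + (t / ε + Real.sqrt t) := by
      intro z hz
      obtain ⟨h1, h2⟩ := hUsub hz
      have hx1 : 0 ≤ z.re := by linarith
      have hx2 : z.re ≤ t / ε := by
        rw [le_div_iff₀ hεpos]; nlinarith [sq_nonneg z.im]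
      have hy : |z.im| ≤ Real.sqrt t := by
        apply Real.abs_le_sqrt; nlinarith
      have hzn : ‖z‖ ≤ t / ε + Real.sqrt t := by
        calc ‖z‖ ≤ |z.re| + |z.im| := Complex.norm_le_abs_re_add_abs_im z
          _ ≤ t / ε + Real.sqrt t := by rw [_root_.abs_of_nonneg hx1]; linarith
      refine ⟨hzn, ?_⟩
      calc ‖(t:ℂ) - z‖ ≤ ‖(t:ℂ)‖ + ‖z‖ := norm_sub_le _ _
        _ ≤ t + (t / ε + Real.sqrt t) := by
            simp only [Complex.norm_real, Real.norm_eq_abs, abs_of_pos htpos]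
            linarith
    have hballbound : t + (t / ε + Real.sqrt t) ≤ r := by
      have h1 : t + (t / ε + Real.sqrt t) ≤ Real.sqrt t * c := by
        have hde : t / ε ≤ Real.sqrt t / ε := by gcongr
        have e1 : Real.sqrt t * (1/ε) = Real.sqrt t / ε := by ring
        rw [hc, mul_add]
        linarith [htle, hde, e1]
      have h2 : Real.sqrt t * c ≤ r := (le_div_iff₀ hcpos).mp htsqrt
      exact le_trans h1 h2
    have hUbdd : Bornology.IsBounded U := by
      apply (Metric.isBounded_closedBall (x := (0:ℂ)) (r := t / ε + Real.sqrt t)).subset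
      intro z hz
      rw [Metric.mem_closedBall, dist_zero_right]
      exact (hclbound z (subset_closure hz)).1
    -- frontier points are in K
    have hfrontK : ∀ z ∈ frontier U, ((z, (t:ℂ) - z) : ℂ × ℂ) ∈ K := by
      intro z hz
      have hzcl : z ∈ closure U := frontier_subset_closure hz
      obtain ⟨h1, h2⟩ := hUsub hzcl
      have hznotU : z ∉ U := ((hUopen.frontier_eq ▸ hz) : z ∈ closure U \ U).2
      have hcase : z.re = t / 2 ∨ ε * z.re + z.im ^ 2 = t := by
        by_contra hcon
        push_neg at hcon
        exact hznotU ⟨lt_of_le_of_ne h1 (Ne.symm hcon.1), lt_of_le_of_ne h2 hcon.2⟩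
      constructor
      · rcases hcase with h | h
        · left
          rw [hS1]
          show (t:ℂ) - z = (starRingEnd ℂ) z
          rw [Complex.ext_iff]
          constructor
          · simp only [Complex.sub_re, Complex.ofReal_re, Complex.conj_re]
            linarith
          · simp only [Complex.sub_im, Complex.ofReal_im, Complex.conj_im]
            ring
        · right
          rw [hS2]
          show (t:ℂ) - z = ((1:ℂ) + lam) * (starRingEnd ℂ) z + (lam:ℂ) * z + ((z.im ^ 2 : ℝ) : ℂ)
          rw [hε] at h
          rw [Complex.ext_iff]
          constructor
          · simp [-Complex.ofReal_pow, ← Complex.ofReal_pow]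
            linear_combination -h
          · simp [-Complex.ofReal_pow, ← Complex.ofReal_pow]
            ring
      · obtain ⟨hb1, hb2⟩ := hclbound z hzcl
        rw [mem_closedBall_zero_iff, Prod.norm_def]
        apply max_le
        · show ‖z‖ ≤ r
          linarith [hballbound]
        · show ‖(t:ℂ) - z‖ ≤ r
          linarith [hballbound]
    -- the inner point
    set x₀ : ℝ := (t / 2 + t / ε) / 2 with hx₀
    have hhalf : t / 2 < t / ε := by
      rw [div_lt_div_iff₀ two_pos hεpos]
      nlinarith
    have hx₀1 : t / 2 < x₀ := by rw [hx₀]; linarith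
    have hx₀2 : x₀ < t / ε := by rw [hx₀]; linarith
    have hx₀U : ((x₀ : ℝ) : ℂ) ∈ U := by
      constructor
      · simpa using hx₀1
      · simp only [Complex.ofReal_re, Complex.ofReal_im, mem_setOf_eq]
        have : ε * x₀ < t := by rw [← lt_div_iff₀' hεpos]; exact hx₀2
        nlinarith
    set p : ℂ × ℂ := (((x₀ : ℝ) : ℂ), (t : ℂ) - ((x₀ : ℝ) : ℂ)) with hp
    -- p is in the hull
    have hhull : p ∈ {z : ℂ × ℂ | ∀ P : MvPolynomial (Fin 2) ℂ,
        ‖pEval P z‖ ≤ ⨆ w ∈ K, ‖pEval P w‖} := by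
      intro P
      have hKcpt : IsCompact K := (isCompact_closedBall 0 r).inter_left hclosed
      obtain ⟨M, hM⟩ := hKcpt.exists_bound_of_continuousOn (pEval_continuous P).continuousOn
      have hfr : ∀ z ∈ frontier U, ‖pEval P (z, (t:ℂ) - z)‖ ≤ ⨆ w ∈ K, ‖pEval P w‖ := by
        intro z hz
        exact le_biSup_of_bdd hM (hfrontK z hz)
      have := Complex.norm_le_of_forall_mem_frontier_norm_le hUbdd
        ((pEval_diag_diff P (t:ℂ)).diffContOnCl) hfr (subset_closure hx₀U)
      simpa [hp] using this
    -- p is not in K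
    have hnotK : p ∉ K := by
      rintro ⟨hmem, -⟩
      rcases hmem with ⟨z, hz⟩ | ⟨z, hz⟩
      · rw [hp, Prod.ext_iff] at hz
        obtain ⟨hz1, hz2⟩ := hz
        dsimp only at hz1 hz2
        rw [← hz1] at hz2
        have : t - x₀ = x₀ := by
          have := congrArg Complex.re hz2
          simpa using this
        linarith
      · rw [hp, Prod.ext_iff] at hz
        obtain ⟨hz1, hz2⟩ := hz
        dsimp only at hz1 hz2
        rw [← hz1] at hz2
        have hre : t - x₀ = (1 + lam) * x₀ + lam * x₀ := by
          have := congrArg Complex.re hz2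
          simpa using this
        have : ε * x₀ < t := by rw [← lt_div_iff₀' hεpos]; exact hx₀2
        rw [hε] at this
        nlinarith
    rw [hPC] at hhull
    exact hnotK hhull
  · -- part (b)
    intro t ht
    have habs : |lam| = -lam := abs_of_neg hlam₂
    have hpos : 0 < t * |lam| := by rw [habs]; nlinarith
    set s := Real.sqrt (t * |lam|) with hs
    have hs2 : s ^ 2 = t * |lam| := Real.sq_sqrt hpos.le
    have hspos : 0 < s := Real.sqrt_pos.mpr hpos
    constructor
    · ext z
      simp only [mem_setOf_eq, mem_insert_iff, mem_singleton_iff, Complex.ext_iff,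
        Complex.add_re, Complex.sub_re, Complex.add_im, Complex.sub_im, Complex.ofReal_re,
        Complex.ofReal_im, Complex.mul_re, Complex.mul_im, Complex.I_re, Complex.I_im]
      constructor
      · rintro ⟨h1, h2⟩
        have hsq : z.im ^ 2 = s ^ 2 := by rw [hs2, habs]; nlinarith
        have him : z.im = s ∨ z.im = -s := sq_eq_sq_iff_eq_or_eq_neg.mp hsq
        rcases him with h | h
        · left; constructor
          · rw [h1]; ring
          · rw [h]; ring
        · right; constructor
          · rw [h1]; ring
          · rw [h]; ring
      · rintro (⟨h1, h2⟩ | ⟨h1, h2⟩) <;> rw [habs] at hs2 <;> constructor <;> nlinarith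
    · simp only [ne_eq, Complex.ext_iff, Complex.add_re, Complex.sub_re, Complex.add_im,
        Complex.sub_im, not_and, Complex.mul_im, Complex.ofReal_re, Complex.ofReal_im,
        Complex.I_re, Complex.I_im]
      intro _ h
      nlinarith
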